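/- Fix positive integers a, b and a nonnegative integer s. Let Ω = 1 + Σ_{n≥1} Ω_n t^n be a formal power series in t with coefficients in ℚ[x] satisfying Ω' = x·Ω^{b+1} + a·t·Ω^b·Ω', and let Φ = 1 + Σ_{n≥1} Φ_n t^n be the unique formal power series with constant term 1 satisfying Φ(t) = Ω(t·Φ(t)^s). Then Φ satisfies the differential equation Φ' = x·Φ^{b+s+1} + (a + s·x)·t·Φ^{b+s}·Φ', where the prime denotes the formal derivative with respect to t. -/

import Mathlib

open PowerSeries

namespace PhiDEAux

open Finset

variable {R : Type*} [CommRing R]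

/-- substitution of `X * H` into `F`, defined coefficientwise. -/
noncomputable def sb (H F : R⟦X⟧) : R⟦X⟧ :=
  PowerSeries.mk fun k => ∑ n ∈ Finset.range (k + 1), coeff (R := R) n F * coeff (R := R) k ((X * H) ^ n)

lemma coeff_pow_eq_zero (H : R⟦X⟧) {k n : ℕ} (h : k < n) : coeff (R := R) k ((X * H) ^ n) = 0 := by
  rw [mul_pow, coeff_X_pow_mul', if_neg (by omega)]

/-- truncated substitution -/
noncomputable def T (H F : R⟦X⟧) (N : ℕ) : R⟦X⟧ :=
  ∑ n ∈ Finset.range N, C (R := R) (coeff (R := R) n F) * (X * H) ^ n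

lemma coeff_T (H F : R⟦X⟧) (N k : ℕ) :
    coeff (R := R) k (T H F N) = ∑ n ∈ Finset.range N, coeff (R := R) n F * coeff (R := R) k ((X * H) ^ n) := by
  simp [T, coeff_C_mul]

lemma coeff_sb_T (H F : R⟦X⟧) {k N : ℕ} (h : k < N) :
    coeff (R := R) k (sb H F) = coeff (R := R) k (T H F N) := by
  rw [coeff_T, sb, coeff_mk]
  apply Finset.sum_subset
  · intro x hx; simp only [mem_range] at *; omega
  · intro x hx hx'
    simp only [mem_range] at hx hx'
    rw [coeff_pow_eq_zero H (by omega), mul_zero]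

lemma coeff_mul_congr {A A' B B' : R⟦X⟧} {k : ℕ}
    (hA : ∀ j ≤ k, coeff (R := R) j A = coeff (R := R) j A') (hB : ∀ j ≤ k, coeff (R := R) j B = coeff (R := R) j B') :
    coeff (R := R) k (A * B) = coeff (R := R) k (A' * B') := by
  rw [coeff_mul, coeff_mul]
  refine Finset.sum_congr rfl fun p hp => ?_
  rw [Finset.HasAntidiagonal.mem_antidiagonal] at hp
  rw [hA _ (by omega), hB _ (by omega)]

lemma triangle {M : Type*} [AddCommMonoid M] (k N : ℕ) (hkN : k < N) (g : ℕ → ℕ → M)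
    (hg : ∀ p q, k < p + q → g p q = 0) :
    ∑ n ∈ Finset.range (2 * N), ∑ pq ∈ Finset.HasAntidiagonal.antidiagonal n, g pq.1 pq.2 =
      ∑ p ∈ Finset.range N, ∑ q ∈ Finset.range N, g p q := by
  rw [← Finset.sum_product']
  rw [← Finset.sum_biUnion (f := fun pq : ℕ × ℕ => g pq.1 pq.2)
      (t := Finset.HasAntidiagonal.antidiagonal) (s := Finset.range (2 * N)) ?hd]
  case hd =>
    intro m _ n _ hmn
    simp only [Finset.disjoint_left]
    intro pq h1 h2
    rw [Finset.HasAntidiagonal.mem_antidiagonal] at h1 h2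
    omega
  set S : Finset (ℕ × ℕ) :=
    (Finset.range N ×ˢ Finset.range N).filter (fun pq => pq.1 + pq.2 ≤ k) with hS
  have e1 : ∑ x ∈ S, g x.1 x.2 =
      ∑ x ∈ (Finset.range (2 * N)).biUnion Finset.HasAntidiagonal.antidiagonal, g x.1 x.2 := by
    apply Finset.sum_subset
    · intro x hx
      simp only [hS, Finset.mem_filter, Finset.mem_product, Finset.mem_range] at hx
      rw [Finset.mem_biUnion]
      exact ⟨x.1 + x.2, Finset.mem_range.2 (by omega), Finset.HasAntidiagonal.mem_antidiagonal.2 rfl⟩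
    · intro x hx hx'
      apply hg
      by_contra hc
      push_neg at hc
      exact hx' (by
        simp only [hS, Finset.mem_filter, Finset.mem_product, Finset.mem_range]
        omega)
  have e2 : ∑ x ∈ S, g x.1 x.2 = ∑ x ∈ Finset.range N ×ˢ Finset.range N, g x.1 x.2 := by
    apply Finset.sum_subset
    · intro x hx
      simp only [hS, Finset.mem_filter] at hx
      exact hx.1
    · intro x hx hx'
      apply hg
      simp only [hS, Finset.mem_filter, hx, true_and] at hx'
      omega
  rw [← e1, e2]

lemma sb_mul (H F K : R⟦X⟧) : sb H (F * K) = sb H F * sb H K := by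
  ext k
  set N := k + 1 with hN
  rw [coeff_mul_congr (fun j hj => coeff_sb_T H F (show j < N by omega))
        (fun j hj => coeff_sb_T H K (show j < N by omega)),
      coeff_sb_T H (F * K) (show k < 2 * N by omega)]
  have LHS : coeff (R := R) k (T H (F * K) (2 * N)) =
      ∑ n ∈ Finset.range (2 * N), ∑ pq ∈ Finset.HasAntidiagonal.antidiagonal n,
        (coeff (R := R) pq.1 F * coeff (R := R) pq.2 K) * coeff (R := R) k ((X * H) ^ (pq.1 + pq.2)) := by
    rw [coeff_T]
    refine Finset.sum_congr rfl fun n hn => ?_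
    rw [coeff_mul, Finset.sum_mul]
    refine Finset.sum_congr rfl fun pq hpq => ?_
    rw [Finset.HasAntidiagonal.mem_antidiagonal] at hpq
    rw [hpq]
  have RHS : coeff (R := R) k (T H F N * T H K N) =
      ∑ p ∈ Finset.range N, ∑ q ∈ Finset.range N,
        (coeff (R := R) p F * coeff (R := R) q K) * coeff (R := R) k ((X * H) ^ (p + q)) := by
    rw [T, T, Finset.sum_mul_sum, map_sum]
    refine Finset.sum_congr rfl fun p hp => ?_
    rw [map_sum]
    refine Finset.sum_congr rfl fun q hq => ?_
    rw [show C (R := R) (coeff (R := R) p F) * (X * H) ^ p * (C (R := R) (coeff (R := R) q K) * (X * H) ^ q)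
        = C (R := R) (coeff (R := R) p F * coeff (R := R) q K) * (X * H) ^ (p + q) by
      rw [map_mul, pow_add]; ring, coeff_C_mul]
  rw [LHS, RHS]
  exact triangle k N (by omega)
    (fun p q => coeff (R := R) p F * coeff (R := R) q K * coeff (R := R) k ((X * H) ^ (p + q)))
    (fun p q h => by
      show coeff (R := R) p F * coeff (R := R) q K * coeff (R := R) k ((X * H) ^ (p + q)) = 0
      rw [coeff_pow_eq_zero H h, mul_zero])

lemma sb_C (H : R⟦X⟧) (r : R) : sb H (C (R := R) r) = C (R := R) r := by
  ext k
  rw [sb, coeff_mk, Finset.sum_eq_single 0]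
  · simp [coeff_C, coeff_one]
  · intro n hn hn0
    simp [coeff_C, hn0]
  · intro h
    exact absurd (Finset.mem_range.2 (by omega)) h

lemma sb_one (H : R⟦X⟧) : sb H 1 = 1 := by
  rw [← map_one (C (R := R)), sb_C, map_one]

lemma sb_pow (H F : R⟦X⟧) (n : ℕ) : sb H (F ^ n) = sb H F ^ n := by
  induction n with
  | zero => simp [sb_one]
  | succ m ih => rw [pow_succ, sb_mul, ih, pow_succ]

lemma sb_add (H F K : R⟦X⟧) : sb H (F + K) = sb H F + sb H K := by
  ext k
  simp [sb, coeff_mk, add_mul, Finset.sum_add_distrib]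

lemma sb_X (H : R⟦X⟧) : sb H X = X * H := by
  ext k
  rw [sb, coeff_mk, Finset.sum_eq_single 1]
  · rw [coeff_X, if_pos rfl, one_mul, pow_one]
  · intro n hn hn1
    rw [coeff_X, if_neg hn1, zero_mul]
  · intro h
    have hk : k = 0 := by
      by_contra hk
      exact h (Finset.mem_range.2 (by omega))
    subst hk
    rw [coeff_X, if_pos rfl, one_mul, pow_one,
      coeff_zero_eq_constantCoeff, map_mul, constantCoeff_X, zero_mul]

lemma derivative_C_mul (r : R) (A : R⟦X⟧) :
    d⁄dX R (C (R := R) r * A) = C (R := R) r * d⁄dX R A := by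
  rw [Derivation.leibniz, derivative_C, smul_zero, add_zero, smul_eq_mul]

lemma derivative_T (H F : R⟦X⟧) (M : ℕ) :
    d⁄dX R (T H F (M + 1)) = T H (d⁄dX R F) M * d⁄dX R (X * H) := by
  rw [T, map_sum, Finset.sum_range_succ']
  have h0 : d⁄dX R (C (R := R) (coeff (R := R) 0 F) * (X * H) ^ 0) = 0 := by
    rw [pow_zero, mul_one, derivative_C]
  rw [h0, add_zero, T, Finset.sum_mul]
  refine Finset.sum_congr rfl fun i hi => ?_
  rw [derivative_C_mul, Derivation.leibniz_pow, Nat.succ_sub_one, coeff_derivative,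
    show (coeff (R := R) (i + 1) F * ((i : R) + 1)) = coeff (R := R) (i + 1) F * (((i + 1 : ℕ) : R)) by
      push_cast; ring,
    map_mul (C (R := R)) (coeff (R := R) (i + 1) F) (((i + 1 : ℕ) : R)), map_natCast (C (R := R)) (i + 1)]
  simp only [smul_eq_mul, nsmul_eq_mul]
  push_cast
  ring

lemma derivative_sb (H F : R⟦X⟧) :
    d⁄dX R (sb H F) = sb H (d⁄dX R F) * d⁄dX R (X * H) := by
  ext k
  have h1 : coeff (R := R) k (d⁄dX R (sb H F)) = coeff (R := R) k (d⁄dX R (T H F (k + 1 + 1))) := by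
    rw [coeff_derivative, coeff_derivative, coeff_sb_T H F (show k + 1 < k + 1 + 1 by omega)]
  rw [h1, derivative_T]
  exact (coeff_mul_congr (fun j hj => coeff_sb_T H _ (by omega)) (fun j _ => rfl)).symm

lemma phi_mul_derivative (Φ : R⟦X⟧) (s : ℕ) :
    Φ * d⁄dX R (X * Φ ^ s) =
      Φ ^ (s + 1) + ((s : ℕ) : R⟦X⟧) * (X * Φ ^ s * d⁄dX R Φ) := by
  rw [Derivation.leibniz, derivative_X, Derivation.leibniz_pow]
  cases s with
  | zero => simp
  | succ m =>
    rw [Nat.succ_sub_one]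
    simp only [smul_eq_mul, nsmul_eq_mul]
    push_cast
    ring

end PhiDEAux

open PhiDEAux in
/-- **Remark (Sun–Zhang), differential equation for `Φ`.**  Fix positive
integers `a`, `b` and a nonnegative integer `s`.  Let `Ω = 1 + Σ_{n≥1} Ω_n tⁿ`
be a formal power series with coefficients in `ℚ[x]` satisfying
`Ω' = x Ω^{b+1} + a t Ω^b Ω'`, and let `Φ = 1 + Σ_{n≥1} Φ_n tⁿ` be the (unique)
formal power series with constant term `1` satisfying `Φ(t) = Ω(t Φ(t)^s)`
(expressed coefficientwise: the coefficient of `tᵏ` in `Φ` equals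
`Σ_{n≤k} Ω_n ⬝ [t^{k-n}] (Φ^{ns})`, since `(t Φ^s)^n = tⁿ Φ^{ns}`).
Then `Φ' = x Φ^{b+s+1} + (a + s x) t Φ^{b+s} Φ'`. -/
theorem phi_differential_equation (a b s : ℕ) (ha : 1 ≤ a) (hb : 1 ≤ b)
    (Ω Φ : PowerSeries (Polynomial ℚ))
    (hΩ0 : constantCoeff (R := Polynomial ℚ) Ω = 1)
    (hΩ : d⁄dX (Polynomial ℚ) Ω =
      C (R := Polynomial ℚ) Polynomial.X * Ω ^ (b + 1) +
        (a : PowerSeries (Polynomial ℚ)) * X * Ω ^ b * d⁄dX (Polynomial ℚ) Ω)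
    (hΦ0 : constantCoeff (R := Polynomial ℚ) Φ = 1)
    (hΦ : ∀ k : ℕ, coeff (R := Polynomial ℚ) k Φ =
      ∑ n ∈ Finset.range (k + 1),
        coeff (R := Polynomial ℚ) n Ω * coeff (R := Polynomial ℚ) (k - n) (Φ ^ (n * s))) :
    d⁄dX (Polynomial ℚ) Φ =
      C (R := Polynomial ℚ) Polynomial.X * Φ ^ (b + s + 1) +
        C (R := Polynomial ℚ) (Polynomial.C (a : ℚ) + (s : ℚ) • Polynomial.X) * X *
          Φ ^ (b + s) * d⁄dX (Polynomial ℚ) Φ := by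
  have hsb : sb (Φ ^ s) Ω = Φ := by
    apply PowerSeries.ext
    intro k
    rw [sb, coeff_mk, hΦ k]
    refine Finset.sum_congr rfl fun n hn => ?_
    rw [Finset.mem_range] at hn
    rw [mul_pow, coeff_X_pow_mul', if_pos (by omega), ← pow_mul, Nat.mul_comm s n]
  set W := sb (Φ ^ s) (d⁄dX (Polynomial ℚ) Ω) with hW
  have e1 : d⁄dX (Polynomial ℚ) Φ = W * d⁄dX (Polynomial ℚ) (X * Φ ^ s) := by
    conv_lhs => rw [← hsb]
    exact derivative_sb _ _
  have e2 : W = C (R := Polynomial ℚ) Polynomial.X * Φ ^ (b + 1) +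
      C (R := Polynomial ℚ) ((a : ℕ) : Polynomial ℚ) * (X * Φ ^ s) * Φ ^ b * W := by
    conv_lhs => rw [hW, hΩ, sb_add, sb_mul, sb_pow, sb_C, hsb,
      show ((a : PowerSeries (Polynomial ℚ)) * X * Ω ^ b * d⁄dX (Polynomial ℚ) Ω) =
        (((a : ℕ) : PowerSeries (Polynomial ℚ)) * X) *
          (Ω ^ b * d⁄dX (Polynomial ℚ) Ω) by ring,
      sb_mul, sb_mul, sb_mul, sb_pow, hsb, sb_X, ← map_natCast (C (R := Polynomial ℚ)) a, sb_C]
    ring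
  have e4 : Φ * d⁄dX (Polynomial ℚ) (X * Φ ^ s) =
      Φ ^ (s + 1) + ((s : ℕ) : PowerSeries (Polynomial ℚ)) *
        (X * Φ ^ s * d⁄dX (Polynomial ℚ) Φ) := by
    exact phi_mul_derivative Φ s
  have hgoalC : C (R := Polynomial ℚ) (Polynomial.C (a : ℚ) + (s : ℚ) • Polynomial.X) =
      C (R := Polynomial ℚ) ((a : ℕ) : Polynomial ℚ) +
        ((s : ℕ) : PowerSeries (Polynomial ℚ)) * C (R := Polynomial ℚ) Polynomial.X := by
    rw [Polynomial.smul_eq_C_mul, map_add, map_mul, ← map_natCast (C (R := Polynomial ℚ)) s]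
    norm_cast
  have key : Φ * d⁄dX (Polynomial ℚ) Φ = Φ * (C (R := Polynomial ℚ) Polynomial.X * Φ ^ (b + s + 1) +
      C (R := Polynomial ℚ) (Polynomial.C (a : ℚ) + (s : ℚ) • Polynomial.X) * X *
        Φ ^ (b + s) * d⁄dX (Polynomial ℚ) Φ) := by
    calc Φ * d⁄dX (Polynomial ℚ) Φ = W * (Φ * d⁄dX (Polynomial ℚ) (X * Φ ^ s)) := by
          rw [e1]; ring
    _ = (C (R := Polynomial ℚ) Polynomial.X * Φ ^ (b + 1) +
          C (R := Polynomial ℚ) ((a : ℕ) : Polynomial ℚ) * (X * Φ ^ s) * Φ ^ b * W) *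
          (Φ * d⁄dX (Polynomial ℚ) (X * Φ ^ s)) := by
        rw [← e2]
    _ = C (R := Polynomial ℚ) Polynomial.X * Φ ^ (b + 1) * (Φ * d⁄dX (Polynomial ℚ) (X * Φ ^ s)) +
          C (R := Polynomial ℚ) ((a : ℕ) : Polynomial ℚ) * X * Φ ^ (s + b) *
            ((W * d⁄dX (Polynomial ℚ) (X * Φ ^ s)) * Φ) := by ring
    _ = C (R := Polynomial ℚ) Polynomial.X * Φ ^ (b + 1) *
          (Φ ^ (s + 1) + ((s : ℕ) : PowerSeries (Polynomial ℚ)) *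
            (X * Φ ^ s * d⁄dX (Polynomial ℚ) Φ)) +
          C (R := Polynomial ℚ) ((a : ℕ) : Polynomial ℚ) * X * Φ ^ (s + b) *
            (d⁄dX (Polynomial ℚ) Φ * Φ) := by rw [e4, ← e1]
    _ = _ := by rw [hgoalC]; ring
  have hU : IsUnit Φ := by
    rw [PowerSeries.isUnit_iff_constantCoeff, hΦ0]
    exact isUnit_one
  exact hU.mul_left_cancel key
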